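/- Let N ≥ 2 be an integer and let 0 ≤ k_1, k_2 < N. Suppose rationals a_1, a_2 and nonzero rationals b_1, b_2 with b_1 b_2 = 2 satisfy the polynomial identity (a_1 Y_1 + a_2 Y_2)^{N+1} = a_1^{N+1} Y_1^{k_1+1}(Y_1 + b_1 Y_2)^{N−k_1} + a_2^{N+1} Y_2^{k_2+1}(Y_2 + b_2 Y_1)^{N−k_2} in ℚ[Y_1, Y_2]. Then a_1 = a_2 = 0. -/
import Mathlib


open MvPolynomial

lemma key_pm (n : ℕ) (hn : n ≠ 0) (m : ℕ) (x y : ℚ)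
    (h : x ^ n = (-1 : ℚ) ^ m * y ^ n) : x = y ∨ x = -y := by
  have habs : |x| ^ n = |y| ^ n := by
    rw [← abs_pow, ← abs_pow, h, abs_mul, abs_pow, abs_neg, abs_one, one_pow, one_mul]
  exact abs_eq_abs.mp ((pow_left_inj₀ (abs_nonneg x) (abs_nonneg y) hn).mp habs)


/-- Case 2 of Lemma 7.4: for N ≥ 2, k_1, k_2 < N, rationals a_1, a_2 and nonzero
rationals b_1, b_2 with b_1 b_2 = 2, the polynomial identity
(a_1 Y_1 + a_2 Y_2)^{N+1}
  = a_1^{N+1} Y_1^{k_1+1}(Y_1 + b_1 Y_2)^{N-k_1}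
  + a_2^{N+1} Y_2^{k_2+1}(Y_2 + b_2 Y_1)^{N-k_2}
forces a_1 = a_2 = 0. -/
theorem stmt_11 (N : ℕ) (hN : 2 ≤ N) (k₁ k₂ : ℕ) (hk₁ : k₁ < N) (hk₂ : k₂ < N)
    (a₁ a₂ b₁ b₂ : ℚ) (hb₁ : b₁ ≠ 0) (hb₂ : b₂ ≠ 0) (hb : b₁ * b₂ = 2)
    (hid : (C a₁ * X 0 + C a₂ * X 1 : MvPolynomial (Fin 2) ℚ) ^ (N + 1) =
      C (a₁ ^ (N + 1)) * X 0 ^ (k₁ + 1) * (X 0 + C b₁ * X 1) ^ (N - k₁) +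
      C (a₂ ^ (N + 1)) * X 1 ^ (k₂ + 1) * (X 1 + C b₂ * X 0) ^ (N - k₂)) :
    a₁ = 0 ∧ a₂ = 0 := by
  have h1 := congrArg (MvPolynomial.eval ![1, -b₂]) hid
  have h2 := congrArg (MvPolynomial.eval ![-b₁, 1]) hid
  simp only [map_add, map_mul, map_pow, eval_C, eval_X, Matrix.cons_val_zero,
    Matrix.cons_val_one, Matrix.head_cons] at h1 h2
  have hn : N + 1 ≠ 0 := Nat.succ_ne_zero N
  have e1 : (a₁ - a₂ * b₂) ^ (N + 1) = (-1 : ℚ) ^ (N - k₁) * a₁ ^ (N + 1) := by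
    rw [show (-b₂ + b₂ * 1 : ℚ) = 0 by ring, zero_pow (Nat.sub_ne_zero_of_lt hk₂),
      mul_zero, add_zero, show (1 + b₁ * -b₂ : ℚ) = -1 by rw [mul_neg, hb]; ring] at h1
    calc (a₁ - a₂ * b₂) ^ (N + 1) = (a₁ * 1 + a₂ * -b₂) ^ (N + 1) := by ring
      _ = _ := by rw [h1]; ring
  have e2 : (a₂ - a₁ * b₁) ^ (N + 1) = (-1 : ℚ) ^ (N - k₂) * a₂ ^ (N + 1) := by
    rw [show (-b₁ + b₁ * 1 : ℚ) = 0 by ring, zero_pow (Nat.sub_ne_zero_of_lt hk₁),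
      mul_zero, zero_add,
      show (1 + b₂ * -b₁ : ℚ) = -1 by rw [mul_neg, mul_comm, hb]; ring] at h2
    calc (a₂ - a₁ * b₁) ^ (N + 1) = (a₁ * -b₁ + a₂ * 1) ^ (N + 1) := by ring
      _ = _ := by rw [h2]; ring
  have c1 := key_pm (N + 1) hn (N - k₁) _ _ e1
  have c2 := key_pm (N + 1) hn (N - k₂) _ _ e2
  rcases c1 with h | h
  · have ha2 : a₂ = 0 := by
      have : a₂ * b₂ = 0 := by linarith
      exact (mul_eq_zero.mp this).resolve_right hb₂
    refine ⟨?_, ha2⟩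
    rcases c2 with h' | h' <;>
    · have : a₁ * b₁ = 0 := by rw [ha2] at h'; linarith
      exact (mul_eq_zero.mp this).resolve_right hb₁
  · rcases c2 with h' | h'
    · have ha1 : a₁ = 0 := by
        have : a₁ * b₁ = 0 := by linarith
        exact (mul_eq_zero.mp this).resolve_right hb₁
      refine ⟨ha1, ?_⟩
      have : a₂ * b₂ = 0 := by rw [ha1] at h; linarith
      exact (mul_eq_zero.mp this).resolve_right hb₂
    · -- a₂ * b₂ = 2 a₁ and a₁ * b₁ = 2 a₂
      have e : 4 * (a₁ * a₂) = 2 * (a₁ * a₂) := by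
        calc 4 * (a₁ * a₂) = (2 * a₁) * (2 * a₂) := by ring
          _ = (a₂ * b₂) * (a₁ * b₁) := by
              rw [show a₂ * b₂ = 2 * a₁ by linarith, show a₁ * b₁ = 2 * a₂ by linarith]
          _ = (a₁ * a₂) * (b₁ * b₂) := by ring
          _ = 2 * (a₁ * a₂) := by rw [hb]; ring
      have h0 : a₁ * a₂ = 0 := by linarith
      rcases mul_eq_zero.mp h0 with h0 | h0
      · exact ⟨h0, by have : a₂ * b₂ = 0 := by rw [h0] at h; linarith
                      exact (mul_eq_zero.mp this).resolve_right hb₂⟩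
      · exact ⟨by have : a₁ * b₁ = 0 := by rw [h0] at h'; linarith
                  exact (mul_eq_zero.mp this).resolve_right hb₁, h0⟩
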